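/- Let K ≥ 2 be an integer and set θ = 1/(K − 1). Let U, V be identically distributed square-integrable real random variables on a probability space with common variance v = Var(U) = Var(V) and Cov(U, V) = −v/(K − 1), and let Δ be a {0,1}-valued random variable with P(Δ = 1) = θ, independent of the pair (U, V). Then Var(U + Δ·V) ≥ (1 + θ − 2θ²)·v = (1 + 1/(K − 1) − 2/(K − 1)²)·Var(U). -/

import Mathlib

open MeasureTheory ProbabilityTheory

/-- Variance growth for CH-BL assignment probabilities: let `K ≥ 2`,
`θ = 1/(K - 1)`, let `U, V` be identically distributed square-integrable random
variables with common variance `v` and `Cov(U, V) = -v/(K - 1)`, and let `Δ` be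
a Bernoulli(θ) variable independent of the pair `(U, V)`. Then
`Var(U + Δ·V) ≥ (1 + θ - 2θ²)·v = (1 + 1/(K-1) - 2/(K-1)²)·Var(U)`. -/
theorem variance_add_bernoulli_mul_ge
    {Ω : Type*} [MeasurableSpace Ω] (P : Measure Ω) [IsProbabilityMeasure P]
    (K : ℕ) (hK : 2 ≤ K) (θ v : ℝ) (hθ : θ = 1 / ((K : ℝ) - 1))
    (Δ U V : Ω → ℝ)
    (hU : MemLp U 2 P) (hV : MemLp V 2 P)
    (hid : IdentDistrib U V P P)
    (hvarU : variance U P = v) (hvarV : variance V P = v)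
    (hcov : (∫ ω, U ω * V ω ∂P) - (∫ ω, U ω ∂P) * (∫ ω, V ω ∂P) =
      -v / ((K : ℝ) - 1))
    (hΔmeas : Measurable Δ)
    (hΔ01 : ∀ ω, Δ ω = 0 ∨ Δ ω = 1)
    (hΔ : P {ω | Δ ω = 1} = ENNReal.ofReal θ)
    (hindep : IndepFun Δ (fun ω => (U ω, V ω)) P) :
    variance (fun ω => U ω + Δ ω * V ω) P ≥ (1 + θ - 2 * θ ^ 2) * v ∧
    variance (fun ω => U ω + Δ ω * V ω) P ≥
      (1 + 1 / ((K : ℝ) - 1) - 2 / ((K : ℝ) - 1) ^ 2) * variance U P := by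
  -- Basic facts about K and θ
  have hK2 : (2 : ℝ) ≤ (K : ℝ) := by exact_mod_cast hK
  have hK1 : (1 : ℝ) ≤ (K : ℝ) - 1 := by linarith
  have hKne : (K : ℝ) - 1 ≠ 0 := by linarith
  have hθpos : 0 < θ := by rw [hθ]; positivity
  have hθle1 : θ ≤ 1 := by
    rw [hθ]; rw [div_le_one (by linarith)]; linarith
  have hθK : θ * ((K : ℝ) - 1) = 1 := by
    rw [hθ]; field_simp
  -- Δ is bounded by 1
  have hΔbd : ∀ ω, ‖Δ ω‖ ≤ 1 := by
    intro ω; rcases hΔ01 ω with h | h <;> simp [h]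
  -- integrability facts
  have intU : Integrable U P := hU.integrable one_le_two
  have intV : Integrable V P := hV.integrable one_le_two
  have intU2 : Integrable (fun ω => U ω ^ 2) P := hU.integrable_sq
  have intV2 : Integrable (fun ω => V ω ^ 2) P := hV.integrable_sq
  have intUV : Integrable (fun ω => U ω * V ω) P := by
    have h12 : (1 : ENNReal) / 1 = 1 / 2 + 1 / 2 := by
      rw [ENNReal.add_halves, one_div, inv_one]
    have h := (hV.smul hU (p := 2) (q := 2) (r := 1)).integrable le_rfl
    exact h
  have intΔ : Integrable Δ P :=
    (memLp_top_of_bound hΔmeas.aestronglyMeasurable 1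
      (Filter.Eventually.of_forall hΔbd)).integrable le_top
  have aΔ : AEStronglyMeasurable Δ P := hΔmeas.aestronglyMeasurable
  have intΔV : Integrable (fun ω => Δ ω * V ω) P :=
    intV.bdd_mul aΔ (Filter.Eventually.of_forall hΔbd)
  have intΔUV : Integrable (fun ω => Δ ω * (U ω * V ω)) P :=
    intUV.bdd_mul aΔ (Filter.Eventually.of_forall hΔbd)
  have intΔV2 : Integrable (fun ω => Δ ω * V ω ^ 2) P :=
    intV2.bdd_mul aΔ (Filter.Eventually.of_forall hΔbd)
  -- E[Δ] = θ
  have hEΔ : ∫ ω, Δ ω ∂P = θ := by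
    have hset : MeasurableSet {ω | Δ ω = 1} := hΔmeas (measurableSet_singleton 1)
    have heq : Δ = Set.indicator {ω | Δ ω = 1} (fun _ => (1 : ℝ)) := by
      funext ω
      rcases hΔ01 ω with h | h
      · rw [h, Set.indicator_apply, if_neg]; simp [Set.mem_setOf_eq, h]
      · rw [h, Set.indicator_apply, if_pos]; simp [Set.mem_setOf_eq, h]
    rw [heq, integral_indicator_const _ hset, measureReal_def, hΔ, smul_eq_mul, mul_one,
      ENNReal.toReal_ofReal hθpos.le]
  -- independence consequences
  have hiV : IndepFun Δ V P := by
    have := hindep.comp measurable_id (measurable_snd : Measurable fun p : ℝ × ℝ => p.2)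
    exact this
  have hiUV : IndepFun Δ (fun ω => U ω * V ω) P := by
    have := hindep.comp measurable_id
      ((measurable_fst.mul measurable_snd) : Measurable fun p : ℝ × ℝ => p.1 * p.2)
    exact this
  have hiV2 : IndepFun Δ (fun ω => V ω ^ 2) P := by
    have := hindep.comp measurable_id
      ((measurable_snd.pow_const 2) : Measurable fun p : ℝ × ℝ => p.2 ^ 2)
    exact this
  have hEΔV : ∫ ω, Δ ω * V ω ∂P = θ * ∫ ω, V ω ∂P := by
    have := hiV.integral_fun_mul_eq_mul_integral intΔ.aestronglyMeasurable intV.aestronglyMeasurable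
    simpa [hEΔ] using this
  have hEΔUV : ∫ ω, Δ ω * (U ω * V ω) ∂P = θ * ∫ ω, U ω * V ω ∂P := by
    have := hiUV.integral_fun_mul_eq_mul_integral intΔ.aestronglyMeasurable intUV.aestronglyMeasurable
    simpa [hEΔ] using this
  have hEΔV2 : ∫ ω, Δ ω * V ω ^ 2 ∂P = θ * ∫ ω, V ω ^ 2 ∂P := by
    have := hiV2.integral_fun_mul_eq_mul_integral intΔ.aestronglyMeasurable intV2.aestronglyMeasurable
    simpa [hEΔ] using this
  -- membership in L2 of U + Δ V
  have hΔV2mem : MemLp (fun ω => Δ ω * V ω) 2 P := by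
    refine MemLp.of_le hV (aΔ.mul hV.aestronglyMeasurable) ?_
    filter_upwards with ω
    have := hΔbd ω
    simp only [norm_mul]
    calc ‖Δ ω‖ * ‖V ω‖ ≤ 1 * ‖V ω‖ := by
          exact mul_le_mul_of_nonneg_right this (norm_nonneg _)
      _ = ‖V ω‖ := one_mul _
  have hWmem : MemLp (fun ω => U ω + Δ ω * V ω) 2 P := hU.add hΔV2mem
  -- expand the square using Δ² = Δ
  have hsq : ∀ ω, (U ω + Δ ω * V ω) ^ 2 =
      U ω ^ 2 + (2 * (Δ ω * (U ω * V ω)) + Δ ω * V ω ^ 2) := by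
    intro ω
    rcases hΔ01 ω with h | h <;> rw [h] <;> ring
  -- compute the variance
  set a := ∫ ω, U ω ∂P with ha
  set b := ∫ ω, V ω ∂P with hb
  set c := ∫ ω, U ω * V ω ∂P with hc
  have hEW : ∫ ω, (U ω + Δ ω * V ω) ∂P = a + θ * b := by
    rw [integral_add intU intΔV, hEΔV]
  have hEW2 : ∫ ω, (U ω + Δ ω * V ω) ^ 2 ∂P =
      (∫ ω, U ω ^ 2 ∂P) + (2 * (θ * c) + θ * ∫ ω, V ω ^ 2 ∂P) := by
    have : (fun ω => (U ω + Δ ω * V ω) ^ 2) =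
        fun ω => U ω ^ 2 + (2 * (Δ ω * (U ω * V ω)) + Δ ω * V ω ^ 2) :=
      funext hsq
    have int2 : Integrable (fun ω => 2 * (Δ ω * (U ω * V ω)) + Δ ω * V ω ^ 2) P :=
      (intΔUV.const_mul 2).add intΔV2
    rw [this, integral_add intU2 int2, integral_add (intΔUV.const_mul 2) intΔV2,
      integral_const_mul, hEΔUV, hEΔV2]
  have hvarW : variance (fun ω => U ω + Δ ω * V ω) P =
      (∫ ω, U ω ^ 2 ∂P) + (2 * (θ * c) + θ * ∫ ω, V ω ^ 2 ∂P) - (a + θ * b) ^ 2 := by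
    rw [variance_eq_sub hWmem]
    simp only [Pi.pow_apply]
    rw [hEW2, hEW]
  have hvU : (∫ ω, U ω ^ 2 ∂P) - a ^ 2 = v := by
    rw [← hvarU, variance_eq_sub hU]; simp [ha]
  have hvV : (∫ ω, V ω ^ 2 ∂P) - b ^ 2 = v := by
    rw [← hvarV, variance_eq_sub hV]; simp [hb]
  have hcv : c - a * b = -v * θ := by
    rw [hcov, hθ]; field_simp
  have hmain : variance (fun ω => U ω + Δ ω * V ω) P =
      (1 + θ - 2 * θ ^ 2) * v + θ * (1 - θ) * b ^ 2 := by
    rw [hvarW]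
    linear_combination hvU + θ * hvV + 2 * θ * hcv
  have hge : variance (fun ω => U ω + Δ ω * V ω) P ≥ (1 + θ - 2 * θ ^ 2) * v := by
    rw [hmain]
    have h0 : 0 ≤ θ * (1 - θ) * b ^ 2 :=
      mul_nonneg (mul_nonneg hθpos.le (by linarith)) (sq_nonneg b)
    linarith
  refine ⟨hge, ?_⟩
  have hrw : 1 + 1 / ((K : ℝ) - 1) - 2 / ((K : ℝ) - 1) ^ 2 = 1 + θ - 2 * θ ^ 2 := by
    rw [hθ]
    field_simp
  rw [hrw, hvarU]
  exact hge
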